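/- Let {A_n} be a sequence of n×n symmetric matrices with nonnegative entries and zeros on the diagonal satisfying (BD) and (MF), fix (β, B) ∈ Θ, and let X be an observation from P_{n,β,B}. Define f_n(y) := (β/2) yᵀ A_n y + B Σ_{i=1}^n y_i and I(y) := Σ_{i=1}^n [ ((1+y_i)/2) log((1+y_i)/2) + ((1−y_i)/2) log((1−y_i)/2) ] for y ∈ (−1,1)^n, so that the gradients are (∇f_n(y))_i = β Σ_j A_n(i,j) y_j + B and (∇I(y))_i = arctanh(y_i). Then with b(x) the vector with coordinates b_i(x) := tanh(β m_i(x) + B), one has ‖∇f_n(b(X)) − ∇I(b(X))‖ / √n → 0 in P_{n,β,B}-probability as n → ∞, where ‖·‖ is the Euclidean norm on ℝⁿ. -/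

import Mathlib

open Filter

noncomputable section

/-- Spin configuration in `{-1,1}^n` encoded by a Boolean vector. -/
def spinVec (n : ℕ) (σ : Fin n → Bool) : Fin n → ℝ := fun i => if σ i then 1 else -1

/-- Local field `m_i(x) = ∑_j A i j * x j`. -/
def mloc {n : ℕ} (A : Matrix (Fin n) (Fin n) ℝ) (x : Fin n → ℝ) (i : Fin n) : ℝ :=
  ∑ j, A i j * x j

/-- Average local field `m̄(x)`. -/
def mbar {n : ℕ} (A : Matrix (Fin n) (Fin n) ℝ) (x : Fin n → ℝ) : ℝ :=
  (1 / (n : ℝ)) * ∑ i, mloc A x i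

/-- `T_n(x) = (1/n) ∑_i (m_i(x) - m̄(x))²`. -/
def Tstat {n : ℕ} (A : Matrix (Fin n) (Fin n) ℝ) (x : Fin n → ℝ) : ℝ :=
  (1 / (n : ℝ)) * ∑ i, (mloc A x i - mbar A x) ^ 2

/-- Unnormalized Ising weight `exp((β/2) xᵀAx + B ∑ x_i)`. -/
def isingWt {n : ℕ} (A : Matrix (Fin n) (Fin n) ℝ) (β B : ℝ) (x : Fin n → ℝ) : ℝ :=
  Real.exp (β / 2 * ∑ i, ∑ j, A i j * x i * x j + B * ∑ i, x i)

/-- Probability of the event `E` under the Ising measure `P_{n,β,B}`. -/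
def isingProb {n : ℕ} (A : Matrix (Fin n) (Fin n) ℝ) (β B : ℝ) (E : Set (Fin n → ℝ)) : ℝ :=
  (∑ σ : Fin n → Bool, E.indicator (isingWt A β B) (spinVec n σ)) /
    (∑ σ : Fin n → Bool, isingWt A β B (spinVec n σ))

/-- Expectation of `f` under the Ising measure `P_{n,β,B}`. -/
def isingExp {n : ℕ} (A : Matrix (Fin n) (Fin n) ℝ) (β B : ℝ) (f : (Fin n → ℝ) → ℝ) : ℝ :=
  (∑ σ : Fin n → Bool, f (spinVec n σ) * isingWt A β B (spinVec n σ)) /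
    (∑ σ : Fin n → Bool, isingWt A β B (spinVec n σ))

/-- Pseudo-likelihood equation `Q_n(β,B|x)`. -/
def Qfun {n : ℕ} (A : Matrix (Fin n) (Fin n) ℝ) (β B : ℝ) (x : Fin n → ℝ) : ℝ :=
  ∑ i, mloc A x i * (x i - Real.tanh (β * mloc A x i + B))

/-- Pseudo-likelihood equation `R_n(β,B|x)`. -/
def Rfun {n : ℕ} (A : Matrix (Fin n) (Fin n) ℝ) (β B : ℝ) (x : Fin n → ℝ) : ℝ :=
  ∑ i, (x i - Real.tanh (β * mloc A x i + B))

/-- `b_i(x) = tanh(β m_i(x) + B)`. -/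
def bvec {n : ℕ} (A : Matrix (Fin n) (Fin n) ℝ) (β B : ℝ) (x : Fin n → ℝ) : Fin n → ℝ :=
  fun i => Real.tanh (β * mloc A x i + B)

/-- `f_n(y) = (β/2) yᵀAy + B ∑ y_i`. -/
def fN {n : ℕ} (A : Matrix (Fin n) (Fin n) ℝ) (β B : ℝ) (y : Fin n → ℝ) : ℝ :=
  β / 2 * ∑ i, ∑ j, A i j * y i * y j + B * ∑ i, y i

/-- Entropy term `I(y)` (with `0 log 0 = 0`, as `Real.log 0 = 0`). -/
def entI {n : ℕ} (y : Fin n → ℝ) : ℝ :=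
  ∑ i, ((1 + y i) / 2 * Real.log ((1 + y i) / 2) + (1 - y i) / 2 * Real.log ((1 - y i) / 2))

/-- Inverse hyperbolic tangent `arctanh(y) = (1/2) log((1+y)/(1-y))`. -/
def arctanhR (y : ℝ) : ℝ := (1 / 2) * Real.log ((1 + y) / (1 - y))

lemma tanh_sub_le (u v : ℝ) : |Real.tanh u - Real.tanh v| ≤ |u - v| := by
  have hd : ∀ x : ℝ, HasDerivAt Real.tanh (1 / Real.cosh x ^ 2) x := by
    intro x
    have h := (Real.hasDerivAt_sinh x).div (Real.hasDerivAt_cosh x) (Real.cosh_pos x).ne'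
    have he : Real.tanh = fun y => Real.sinh y / Real.cosh y :=
      funext fun y => Real.tanh_eq_sinh_div_cosh y
    rw [he]
    refine h.congr_deriv ?_
    have h2 := Real.cosh_sq_sub_sinh_sq x
    rw [show Real.cosh x * Real.cosh x - Real.sinh x * Real.sinh x = 1 by nlinarith [h2]]
  have key := convex_univ.norm_image_sub_le_of_norm_hasDerivWithin_le
      (f := Real.tanh) (f' := fun x => 1 / Real.cosh x ^ 2) (C := 1)
      (fun x _ => (hd x).hasDerivWithinAt)
      (fun x _ => by
        rw [Real.norm_eq_abs, abs_of_nonneg (by positivity), div_le_one (by positivity)]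
        nlinarith [Real.one_le_cosh x])
      (Set.mem_univ v) (Set.mem_univ u)
  simpa [Real.norm_eq_abs] using key

lemma arctanhR_tanh (z : ℝ) : arctanhR (Real.tanh z) = z := by
  unfold arctanhR
  rw [Real.tanh_eq_sinh_div_cosh]
  have hc := (Real.cosh_pos z).ne'
  have h1 : 1 + Real.sinh z / Real.cosh z = Real.exp z / Real.cosh z := by
    field_simp
    exact Real.cosh_add_sinh z
  have h2 : 1 - Real.sinh z / Real.cosh z = Real.exp (-z) / Real.cosh z := by
    field_simp
    exact Real.cosh_sub_sinh z
  have h3 : Real.exp z / Real.cosh z / (Real.exp (-z) / Real.cosh z)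
      = Real.exp z / Real.exp (-z) := by
    rw [div_div_div_cancel_right₀]
    exact hc
  rw [h1, h2, h3, ← Real.exp_sub, Real.log_exp]
  ring

lemma abs_tanh_le_one (x : ℝ) : |Real.tanh x| ≤ 1 := by
  rw [Real.tanh_eq_sinh_div_cosh, abs_div, abs_of_pos (Real.cosh_pos x),
    div_le_one (Real.cosh_pos x)]
  nlinarith [Real.cosh_sq x, Real.cosh_pos x, abs_nonneg (Real.sinh x), sq_abs (Real.sinh x),
    mul_self_nonneg (Real.cosh x - |Real.sinh x|)]

lemma tanh_pair (θ : ℝ) (s : ℝ) (hs : s = 1 ∨ s = -1) :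
    (s - Real.tanh θ) + (-s - Real.tanh θ) * Real.exp (-(2 * s * θ)) = 0 := by
  have hc := (Real.cosh_pos θ).ne'
  have hep := (Real.exp_pos θ).ne'
  rcases hs with h | h <;> subst h
  · rw [Real.tanh_eq_sinh_div_cosh, Real.sinh_eq, Real.cosh_eq,
      show (-(2 * (1:ℝ) * θ)) = -θ + -θ by ring, Real.exp_add, Real.exp_neg]
    rw [Real.cosh_eq] at hc
    field_simp
    ring
  · rw [Real.tanh_eq_sinh_div_cosh, Real.sinh_eq, Real.cosh_eq,
      show (-(2 * (-1:ℝ) * θ)) = θ + θ by ring, Real.exp_add, Real.exp_neg]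
    rw [Real.cosh_eq] at hc
    field_simp
    ring


lemma qform_eq {n : ℕ} (A : Matrix (Fin n) (Fin n) ℝ) (x : Fin n → ℝ) :
    ∑ i, ∑ l, A i l * x i * x l = ∑ i, x i * mloc A x i := by
  refine Finset.sum_congr rfl fun i _ => ?_
  rw [mloc, Finset.mul_sum]
  exact Finset.sum_congr rfl fun l _ => by ring

lemma mloc_update {n : ℕ} (A : Matrix (Fin n) (Fin n) ℝ) (x : Fin n → ℝ) (j k : Fin n) (c : ℝ) :
    mloc A (Function.update x j c) k = mloc A x k + A k j * (c - x j) := by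
  unfold mloc
  have h : ∀ l ∈ Finset.univ,
      A k l * Function.update x j c l
        = A k l * x l + (if l = j then A k j * (c - x j) else 0) := by
    intro l _
    rcases eq_or_ne l j with rfl | h
    · simp only [Function.update_self, if_true, eq_self_iff_true]; ring
    · simp [Function.update_of_ne h, h]
  rw [Finset.sum_congr rfl h, Finset.sum_add_distrib, Finset.sum_ite_eq' Finset.univ j]
  simp

lemma qform_update {n : ℕ} {A : Matrix (Fin n) (Fin n) ℝ} (hs : A.IsSymm)
    {j : Fin n} (hd : A j j = 0) (x : Fin n → ℝ) (c : ℝ) :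
    ∑ i, ∑ l, A i l * Function.update x j c i * Function.update x j c l
      = (∑ i, ∑ l, A i l * x i * x l) + 2 * (c - x j) * mloc A x j := by
  rw [qform_eq, qform_eq]
  have key : ∀ i ∈ Finset.univ,
      Function.update x j c i * mloc A (Function.update x j c) i
        = x i * mloc A x i + (c - x j) * (A i j * x i)
          + (if i = j then (c - x j) * mloc A x j + (c - x j)^2 * A j j else 0) := by
    intro i _
    rw [mloc_update]
    rcases eq_or_ne i j with rfl | h
    · simp only [Function.update_self, if_true, eq_self_iff_true]; ring
    · simp only [Function.update_of_ne h, if_neg h]; ring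
  rw [Finset.sum_congr rfl key, Finset.sum_add_distrib, Finset.sum_add_distrib,
    Finset.sum_ite_eq' Finset.univ j]
  have hsum : ∑ i, (c - x j) * (A i j * x i) = (c - x j) * mloc A x j := by
    rw [mloc, Finset.mul_sum]
    refine Finset.sum_congr rfl fun i _ => ?_
    rw [hs.apply j i]
  rw [hsum]
  simp [hd]
  ring

lemma sum_update {n : ℕ} (x : Fin n → ℝ) (j : Fin n) (c : ℝ) :
    ∑ i, Function.update x j c i = (∑ i, x i) + (c - x j) := by
  have h : ∀ i ∈ Finset.univ,
      Function.update x j c i = x i + (if i = j then c - x j else 0) := by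
    intro i _
    rcases eq_or_ne i j with rfl | h
    · simp
    · simp [Function.update_of_ne h, h]
  rw [Finset.sum_congr rfl h, Finset.sum_add_distrib, Finset.sum_ite_eq' Finset.univ j]
  simp

lemma isingWt_update {n : ℕ} {A : Matrix (Fin n) (Fin n) ℝ} (hs : A.IsSymm)
    {j : Fin n} (hd : A j j = 0) (β B : ℝ) (x : Fin n → ℝ) (c : ℝ) :
    isingWt A β B (Function.update x j c)
      = isingWt A β B x * Real.exp ((c - x j) * (β * mloc A x j + B)) := by
  unfold isingWt
  rw [← Real.exp_add]
  congr 1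
  rw [qform_update hs hd, sum_update]
  ring

lemma spinVec_update (n : ℕ) (σ : Fin n → Bool) (j : Fin n) (b : Bool) :
    spinVec n (Function.update σ j b)
      = Function.update (spinVec n σ) j (if b then (1:ℝ) else -1) := by
  funext i
  unfold spinVec
  rcases eq_or_ne i j with rfl | h
  · simp
  · simp [Function.update_of_ne h]

lemma spin_cases {n : ℕ} (σ : Fin n → Bool) (j : Fin n) :
    spinVec n σ j = 1 ∨ spinVec n σ j = -1 := by
  unfold spinVec; rcases σ j with _ | _ <;> simp

lemma flip_involutive {n : ℕ} (j : Fin n) :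
    Function.Involutive (fun σ : Fin n → Bool => Function.update σ j (!σ j)) := by
  intro σ
  funext i
  rcases eq_or_ne i j with rfl | h
  · simp
  · simp [Function.update_of_ne h]

lemma flip_cancel {n : ℕ} {A : Matrix (Fin n) (Fin n) ℝ} (hs : A.IsSymm)
    (β B : ℝ) {j : Fin n} (hd : A j j = 0)
    (g : (Fin n → ℝ) → ℝ)
    (hg : ∀ (σ : Fin n → Bool) (b : Bool),
      g (spinVec n (Function.update σ j b)) = g (spinVec n σ)) :
    ∑ σ : Fin n → Bool,
      (spinVec n σ j - Real.tanh (β * mloc A (spinVec n σ) j + B)) * g (spinVec n σ)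
        * isingWt A β B (spinVec n σ) = 0 := by
  set F : (Fin n → Bool) → ℝ := fun σ =>
    (spinVec n σ j - Real.tanh (β * mloc A (spinVec n σ) j + B)) * g (spinVec n σ)
      * isingWt A β B (spinVec n σ) with hF
  set flip : (Fin n → Bool) → (Fin n → Bool) :=
    fun σ => Function.update σ j (!σ j) with hflipdef
  have hinv : Function.Involutive flip := flip_involutive j
  have hpair : ∀ σ, F σ + F (flip σ) = 0 := by
    intro σ
    set x := spinVec n σ with hx
    set s := x j with hsx
    have hs1 : s = 1 ∨ s = -1 := spin_cases σ j
    have hxf : spinVec n (flip σ) = Function.update x j (-s) := by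
      rw [hflipdef, spinVec_update]
      congr 1
      rcases eq_or_ne (σ j) true with h | h
      · have : s = 1 := by rw [hsx, hx]; unfold spinVec; simp [h]
        simp [h, this]
      · have hb : σ j = false := by simpa using h
        have : s = -1 := by rw [hsx, hx]; unfold spinVec; simp [hb]
        simp [hb, this]
    have hm : mloc A (spinVec n (flip σ)) j = mloc A x j := by
      rw [hxf, mloc_update, hd]; ring
    have hgf : g (spinVec n (flip σ)) = g x := hg σ (!σ j)
    have hwf : isingWt A β B (spinVec n (flip σ))
        = isingWt A β B x * Real.exp ((-s - s) * (β * mloc A x j + B)) := by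
      rw [hxf, isingWt_update hs hd]
    have hxfj : spinVec n (flip σ) j = -s := by rw [hxf]; simp
    rw [hF]
    simp only [hxfj, hm, hgf, hwf, ← hx, ← hsx]
    set θ := β * mloc A x j + B with hθ
    have hpp := tanh_pair θ s hs1
    have harg : (-s - s) * θ = -(2 * s * θ) := by ring
    rw [harg]
    linear_combination g x * isingWt A β B x * hpp
  have hsum2 : ∑ σ, F (flip σ) = ∑ σ, F σ := by
    exact Equiv.sum_comp hinv.toPerm F
  have h2 : (2:ℝ) * ∑ σ : Fin n → Bool, F σ = 0 := by
    have := Finset.sum_add_distrib (s := (Finset.univ : Finset (Fin n → Bool)))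
      (f := F) (g := fun σ => F (flip σ))
    calc (2:ℝ) * ∑ σ : Fin n → Bool, F σ
        = (∑ σ : Fin n → Bool, F σ) + ∑ σ : Fin n → Bool, F (flip σ) := by rw [hsum2]; ring
      _ = ∑ σ : Fin n → Bool, (F σ + F (flip σ)) := by rw [Finset.sum_add_distrib]
      _ = 0 := by simp [hpair]
  linarith

lemma eps_abs_le {n : ℕ} (A : Matrix (Fin n) (Fin n) ℝ) (β B : ℝ) (σ : Fin n → Bool) (j : Fin n) :
    |spinVec n σ j - Real.tanh (β * mloc A (spinVec n σ) j + B)| ≤ 2 := by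
  have h1 := spin_cases σ j
  have h2 := abs_tanh_le_one (β * mloc A (spinVec n σ) j + B)
  rw [abs_le] at h2 ⊢
  rcases h1 with h | h <;> rw [h] <;> constructor <;> linarith [h2.1, h2.2]

lemma cov_bound {n : ℕ} {A : Matrix (Fin n) (Fin n) ℝ} (hs : A.IsSymm)
    (hd : ∀ i, A i i = 0) (hnn : ∀ i l, 0 ≤ A i l) (β B : ℝ) (hβ : 0 < β) {j k : Fin n} (hjk : k ≠ j) :
    |∑ σ : Fin n → Bool,
        (spinVec n σ j - Real.tanh (β * mloc A (spinVec n σ) j + B)) *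
        (spinVec n σ k - Real.tanh (β * mloc A (spinVec n σ) k + B)) *
        isingWt A β B (spinVec n σ)|
      ≤ 2 * (β * A k j) * ∑ σ : Fin n → Bool, isingWt A β B (spinVec n σ) := by
  set g : (Fin n → ℝ) → ℝ := fun x =>
    x k - Real.tanh (β * (mloc A x k - A k j * x j) + B) with hgdef
  have hg : ∀ (σ : Fin n → Bool) (b : Bool),
      g (spinVec n (Function.update σ j b)) = g (spinVec n σ) := by
    intro σ b
    rw [spinVec_update, hgdef]
    simp only
    rw [mloc_update, Function.update_of_ne hjk, Function.update_self]
    ring_nf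
  have hzero := flip_cancel hs β B (hd j) g hg
  have hsplit : ∀ σ ∈ (Finset.univ : Finset (Fin n → Bool)),
      (spinVec n σ j - Real.tanh (β * mloc A (spinVec n σ) j + B)) *
        (spinVec n σ k - Real.tanh (β * mloc A (spinVec n σ) k + B)) *
        isingWt A β B (spinVec n σ)
      = (spinVec n σ j - Real.tanh (β * mloc A (spinVec n σ) j + B)) * g (spinVec n σ) *
          isingWt A β B (spinVec n σ)
        + (spinVec n σ j - Real.tanh (β * mloc A (spinVec n σ) j + B)) *
          (Real.tanh (β * (mloc A (spinVec n σ) k - A k j * spinVec n σ j) + B)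
            - Real.tanh (β * mloc A (spinVec n σ) k + B)) *
          isingWt A β B (spinVec n σ) := by
    intro σ _; rw [hgdef]; ring
  rw [Finset.sum_congr rfl hsplit, Finset.sum_add_distrib, hzero, zero_add]
  refine (Finset.abs_sum_le_sum_abs _ _).trans ?_
  rw [Finset.mul_sum]
  refine Finset.sum_le_sum fun σ _ => ?_
  have hw : (0:ℝ) < isingWt A β B (spinVec n σ) := Real.exp_pos _
  rw [abs_mul, abs_mul, abs_of_pos hw]
  have h1 := eps_abs_le A β B σ j
  have h2 : |Real.tanh (β * (mloc A (spinVec n σ) k - A k j * spinVec n σ j) + B)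
      - Real.tanh (β * mloc A (spinVec n σ) k + B)| ≤ β * A k j := by
    refine (tanh_sub_le _ _).trans ?_
    have harg : (β * (mloc A (spinVec n σ) k - A k j * spinVec n σ j) + B)
        - (β * mloc A (spinVec n σ) k + B) = -(β * A k j * spinVec n σ j) := by ring
    rw [harg, abs_neg, abs_mul]
    have : |spinVec n σ j| = 1 := by
      rcases spin_cases σ j with h | h <;> rw [h] <;> norm_num
    rw [this, mul_one, abs_mul]
    have hb : |β| = β := abs_of_pos hβ
    rw [hb, abs_of_nonneg (hnn k j)]
  have hnn1 : (0:ℝ) ≤ |spinVec n σ j - Real.tanh (β * mloc A (spinVec n σ) j + B)| := abs_nonneg _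
  have hnn2 : (0:ℝ) ≤ |Real.tanh (β * (mloc A (spinVec n σ) k - A k j * spinVec n σ j) + B)
      - Real.tanh (β * mloc A (spinVec n σ) k + B)| := abs_nonneg _
  nlinarith [mul_le_mul h1 h2 hnn2 (by norm_num : (0:ℝ) ≤ 2)]

lemma diag_bound {n : ℕ} (A : Matrix (Fin n) (Fin n) ℝ) (β B : ℝ) (j : Fin n) :
    ∑ σ : Fin n → Bool,
        (spinVec n σ j - Real.tanh (β * mloc A (spinVec n σ) j + B)) *
        (spinVec n σ j - Real.tanh (β * mloc A (spinVec n σ) j + B)) *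
        isingWt A β B (spinVec n σ)
      ≤ 4 * ∑ σ : Fin n → Bool, isingWt A β B (spinVec n σ) := by
  rw [Finset.mul_sum]
  refine Finset.sum_le_sum fun σ _ => ?_
  have hw : (0:ℝ) < isingWt A β B (spinVec n σ) := Real.exp_pos _
  have h1 := eps_abs_le A β B σ j
  have h2 : (spinVec n σ j - Real.tanh (β * mloc A (spinVec n σ) j + B)) *
      (spinVec n σ j - Real.tanh (β * mloc A (spinVec n σ) j + B)) ≤ 4 := by
    nlinarith [abs_mul_abs_self (spinVec n σ j - Real.tanh (β * mloc A (spinVec n σ) j + B)),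
      mul_self_le_mul_self (abs_nonneg (spinVec n σ j - Real.tanh (β * mloc A (spinVec n σ) j + B))) h1]
  exact mul_le_mul_of_nonneg_right h2 hw.le

lemma sum_sum_mul {n : ℕ} (f g : Fin n → ℝ) :
    ∑ k : Fin n, ∑ i : Fin n, f i * g k = (∑ i, f i) * (∑ k, g k) := by
  rw [Finset.sum_comm, Finset.sum_mul_sum]

lemma triple_bound {n : ℕ} {A : Matrix (Fin n) (Fin n) ℝ} (hs : A.IsSymm)
    (hnn : ∀ i l, 0 ≤ A i l) {γ : ℝ} (hγ : ∀ i, ∑ l, A i l ≤ γ) :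
    ∑ j : Fin n, ∑ k : Fin n, (∑ i, A i j * A i k) * A k j
      ≤ γ * ∑ i, ∑ l, (A i l) ^ 2 := by
  have colsum : ∀ j : Fin n, ∑ k, A k j ≤ γ := by
    intro j
    have h : ∑ k, A k j = ∑ k, A j k := Finset.sum_congr rfl fun k _ => hs.apply j k
    rw [h]; exact hγ j
  have sqnn : ∀ j : Fin n, (0:ℝ) ≤ ∑ i, (A i j)^2 :=
    fun j => Finset.sum_nonneg fun i _ => sq_nonneg _
  have step1 : ∑ j : Fin n, ∑ k : Fin n, (∑ i, A i j * A i k) * A k j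
      ≤ ∑ j : Fin n, ∑ k : Fin n, ∑ i : Fin n,
          ((A i j)^2 * A k j / 2 + (A i k)^2 * A k j / 2) := by
    refine Finset.sum_le_sum fun j _ => Finset.sum_le_sum fun k _ => ?_
    rw [Finset.sum_mul]
    refine Finset.sum_le_sum fun i _ => ?_
    nlinarith [sq_nonneg (A i j - A i k), hnn k j, hnn i j, hnn i k,
      mul_le_mul_of_nonneg_right (by nlinarith [sq_nonneg (A i j - A i k)] :
        A i j * A i k ≤ ((A i j)^2 + (A i k)^2)/2) (hnn k j)]
  refine step1.trans ?_
  have split : ∑ j : Fin n, ∑ k : Fin n, ∑ i : Fin n,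
      ((A i j)^2 * A k j / 2 + (A i k)^2 * A k j / 2)
      = (∑ j : Fin n, ∑ k : Fin n, ∑ i : Fin n, (A i j)^2 * A k j) / 2
        + (∑ j : Fin n, ∑ k : Fin n, ∑ i : Fin n, (A i k)^2 * A k j) / 2 := by
    simp_rw [Finset.sum_add_distrib, Finset.sum_div]
  rw [split]
  have Sa : ∑ j : Fin n, ∑ k : Fin n, ∑ i : Fin n, (A i j)^2 * A k j
      ≤ γ * ∑ i, ∑ l, (A i l)^2 := by
    have h1 : ∀ j : Fin n, ∑ k : Fin n, ∑ i : Fin n, (A i j)^2 * A k j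
        = (∑ i, (A i j)^2) * (∑ k, A k j) := fun j => sum_sum_mul _ _
    calc ∑ j : Fin n, ∑ k : Fin n, ∑ i : Fin n, (A i j)^2 * A k j
        = ∑ j : Fin n, (∑ i, (A i j)^2) * (∑ k, A k j) :=
          Finset.sum_congr rfl fun j _ => h1 j
      _ ≤ ∑ j : Fin n, (∑ i, (A i j)^2) * γ :=
          Finset.sum_le_sum fun j _ => mul_le_mul_of_nonneg_left (colsum j) (sqnn j)
      _ = γ * ∑ j : Fin n, ∑ i, (A i j)^2 := by rw [← Finset.sum_mul]; ring
      _ = γ * ∑ i, ∑ l, (A i l)^2 := by rw [Finset.sum_comm]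
  have Sb : ∑ j : Fin n, ∑ k : Fin n, ∑ i : Fin n, (A i k)^2 * A k j
      ≤ γ * ∑ i, ∑ l, (A i l)^2 := by
    rw [Finset.sum_comm]
    have h1 : ∀ k : Fin n, ∑ j : Fin n, ∑ i : Fin n, (A i k)^2 * A k j
        = (∑ i, (A i k)^2) * (∑ j, A k j) := fun k => sum_sum_mul _ _
    calc ∑ k : Fin n, ∑ j : Fin n, ∑ i : Fin n, (A i k)^2 * A k j
        = ∑ k : Fin n, (∑ i, (A i k)^2) * (∑ j, A k j) :=
          Finset.sum_congr rfl fun k _ => h1 k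
      _ ≤ ∑ k : Fin n, (∑ i, (A i k)^2) * γ :=
          Finset.sum_le_sum fun k _ => mul_le_mul_of_nonneg_left (hγ k) (sqnn k)
      _ = γ * ∑ k : Fin n, ∑ i, (A i k)^2 := by rw [← Finset.sum_mul]; ring
      _ = γ * ∑ i, ∑ l, (A i l)^2 := by rw [Finset.sum_comm]
  linarith

lemma Nbound {n : ℕ} {A : Matrix (Fin n) (Fin n) ℝ} (hs : A.IsSymm)
    (hd : ∀ i, A i i = 0) (hnn : ∀ i l, 0 ≤ A i l) (β B : ℝ) (hβ : 0 < β)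
    {γ : ℝ} (hγ : ∀ i, ∑ l, A i l ≤ γ) :
    ∑ σ : Fin n → Bool, (∑ i, (∑ l, A i l *
        (spinVec n σ l - Real.tanh (β * mloc A (spinVec n σ) l + B)))^2)
        * isingWt A β B (spinVec n σ)
      ≤ (4 + 2*β*γ) * (∑ i, ∑ l, (A i l)^2) *
        ∑ σ : Fin n → Bool, isingWt A β B (spinVec n σ) := by
  set Z := ∑ σ : Fin n → Bool, isingWt A β B (spinVec n σ) with hZdef
  have hZ : 0 < Z := Finset.sum_pos (fun σ _ => Real.exp_pos _) Finset.univ_nonempty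
  set eps : (Fin n → Bool) → Fin n → ℝ :=
    fun σ l => spinVec n σ l - Real.tanh (β * mloc A (spinVec n σ) l + B) with heps
  set T := ∑ i, ∑ l, (A i l)^2 with hT
  -- Step A : expand the square
  have stepA : ∀ σ : Fin n → Bool,
      (∑ i, (∑ l, A i l * eps σ l)^2)
        = ∑ j : Fin n, ∑ k : Fin n, (∑ i, A i j * A i k) * (eps σ j * eps σ k) := by
    intro σ
    have h1 : ∀ i : Fin n, (∑ l, A i l * eps σ l)^2
        = ∑ j : Fin n, ∑ k : Fin n, (A i j * A i k) * (eps σ j * eps σ k) := by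
      intro i
      rw [sq, Finset.sum_mul_sum]
      exact Finset.sum_congr rfl fun j _ => Finset.sum_congr rfl fun k _ => by ring
    rw [Finset.sum_congr rfl fun i _ => h1 i]
    rw [Finset.sum_comm]
    refine Finset.sum_congr rfl fun j _ => ?_
    rw [Finset.sum_comm]
    refine Finset.sum_congr rfl fun k _ => ?_
    rw [Finset.sum_mul]
  -- Step B : swap the sum over σ inside
  have stepB : ∑ σ : Fin n → Bool, (∑ i, (∑ l, A i l * eps σ l)^2) * isingWt A β B (spinVec n σ)
      = ∑ j : Fin n, ∑ k : Fin n, (∑ i, A i j * A i k) *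
          (∑ σ : Fin n → Bool, eps σ j * eps σ k * isingWt A β B (spinVec n σ)) := by
    have h1 : ∀ σ : Fin n → Bool,
        (∑ i, (∑ l, A i l * eps σ l)^2) * isingWt A β B (spinVec n σ)
          = ∑ j : Fin n, ∑ k : Fin n, (∑ i, A i j * A i k) *
              (eps σ j * eps σ k * isingWt A β B (spinVec n σ)) := by
      intro σ
      rw [stepA σ, Finset.sum_mul]
      refine Finset.sum_congr rfl fun j _ => ?_
      rw [Finset.sum_mul]
      refine Finset.sum_congr rfl fun k _ => by ring
    rw [Finset.sum_congr rfl fun σ _ => h1 σ, Finset.sum_comm]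
    refine Finset.sum_congr rfl fun j _ => ?_
    rw [Finset.sum_comm]
    refine Finset.sum_congr rfl fun k _ => ?_
    rw [← Finset.mul_sum]
  rw [stepB]
  -- Step C : bound each covariance term
  have stepC : ∀ j k : Fin n,
      (∑ i, A i j * A i k) * (∑ σ : Fin n → Bool, eps σ j * eps σ k * isingWt A β B (spinVec n σ))
        ≤ (∑ i, A i j * A i k) * ((if j = k then 4 else 2 * β * A k j) * Z) := by
    intro j k
    have hC : (0:ℝ) ≤ ∑ i, A i j * A i k :=
      Finset.sum_nonneg fun i _ => mul_nonneg (hnn i j) (hnn i k)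
    refine mul_le_mul_of_nonneg_left ?_ hC
    rcases eq_or_ne j k with rfl | hjk
    · simpa using diag_bound A β B j
    · have hcb := cov_bound hs hd hnn β B hβ (Ne.symm hjk)
      calc ∑ σ : Fin n → Bool, eps σ j * eps σ k * isingWt A β B (spinVec n σ)
          ≤ |∑ σ : Fin n → Bool, eps σ j * eps σ k * isingWt A β B (spinVec n σ)| := le_abs_self _
        _ ≤ 2 * (β * A k j) * Z := hcb
        _ = (if j = k then (4:ℝ) else 2 * β * A k j) * Z := by rw [if_neg hjk]; ring
  refine (Finset.sum_le_sum fun j _ => Finset.sum_le_sum fun k _ => stepC j k).trans ?_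
  -- Step D : final algebra
  have hdiagsum : ∑ j : Fin n, ∑ k : Fin n,
      (if j = k then (∑ i, A i j * A i k) * 4 else 0) = 4 * T := by
    have h1 : ∀ j : Fin n, ∑ k : Fin n,
        (if j = k then (∑ i, A i j * A i k) * 4 else 0) = (∑ i, A i j * A i j) * 4 := by
      intro j
      rw [Finset.sum_ite_eq]
      simp
    rw [Finset.sum_congr rfl fun j _ => h1 j, hT, Finset.sum_comm, Finset.mul_sum]
    refine Finset.sum_congr rfl fun j _ => ?_
    rw [Finset.mul_sum, Finset.sum_mul]
    refine Finset.sum_congr rfl fun i _ => by ring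
  have htrip := triple_bound hs hnn hγ
  rw [← hT] at htrip
  have keyeq : ∑ j : Fin n, ∑ k : Fin n,
      (∑ i, A i j * A i k) * ((if j = k then 4 else 2 * β * A k j) * Z)
      = Z * (∑ j : Fin n, ∑ k : Fin n, (if j = k then (∑ i, A i j * A i k) * 4 else 0))
        + Z * (2 * β * ∑ j : Fin n, ∑ k : Fin n, (∑ i, A i j * A i k) * A k j) := by
    have hpt : ∀ j k : Fin n,
        (∑ i, A i j * A i k) * ((if j = k then 4 else 2 * β * A k j) * Z)
        = Z * (if j = k then (∑ i, A i j * A i k) * 4 else 0)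
          + Z * (2 * β * ((∑ i, A i j * A i k) * A k j)) := by
      intro j k
      rcases eq_or_ne j k with rfl | hjk
      · rw [if_pos rfl, if_pos rfl, hd j]; ring
      · rw [if_neg hjk, if_neg hjk]; ring
    calc ∑ j : Fin n, ∑ k : Fin n,
          (∑ i, A i j * A i k) * ((if j = k then 4 else 2 * β * A k j) * Z)
        = ∑ j : Fin n, ∑ k : Fin n, (Z * (if j = k then (∑ i, A i j * A i k) * 4 else 0)
            + Z * (2 * β * ((∑ i, A i j * A i k) * A k j))) :=
          Finset.sum_congr rfl fun j _ => Finset.sum_congr rfl fun k _ => hpt j k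
      _ = _ := by
          simp_rw [Finset.sum_add_distrib, ← Finset.mul_sum]
  rw [keyeq, hdiagsum]
  have hTnn : (0:ℝ) ≤ T := Finset.sum_nonneg fun i _ =>
    Finset.sum_nonneg fun l _ => sq_nonneg _
  have hb : Z * (2 * β * (∑ j : Fin n, ∑ k : Fin n, (∑ i, A i j * A i k) * A k j))
      ≤ Z * (2 * β * (γ * T)) := by
    refine mul_le_mul_of_nonneg_left ?_ hZ.le
    exact mul_le_mul_of_nonneg_left htrip (by positivity)
  nlinarith [hb]

lemma isingProb_nonneg {n : ℕ} (A : Matrix (Fin n) (Fin n) ℝ) (β B : ℝ) (E : Set (Fin n → ℝ)) :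
    0 ≤ isingProb A β B E := by
  unfold isingProb
  refine div_nonneg (Finset.sum_nonneg fun σ _ => ?_)
    (Finset.sum_nonneg fun σ _ => (Real.exp_pos _).le)
  exact Set.indicator_apply_nonneg fun _ => (Real.exp_pos _).le

lemma expr_eq {n : ℕ} (A : Matrix (Fin n) (Fin n) ℝ) (β B : ℝ) (x : Fin n → ℝ) :
    ∑ i, (β * mloc A (bvec A β B x) i + B - arctanhR (bvec A β B x i))^2
      = β^2 * ∑ i, (∑ l, A i l * (x l - Real.tanh (β * mloc A x l + B)))^2 := by
  rw [Finset.mul_sum]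
  refine Finset.sum_congr rfl fun i _ => ?_
  have h1 : arctanhR (bvec A β B x i) = β * mloc A x i + B := arctanhR_tanh _
  have key : ∑ l, A i l * (x l - Real.tanh (β * mloc A x l + B))
      = mloc A x i - mloc A (bvec A β B x) i := by
    simp only [mul_sub]
    rw [Finset.sum_sub_distrib]
    rfl
  have h2 : β * mloc A (bvec A β B x) i + B - arctanhR (bvec A β B x i)
      = -(β * ∑ l, A i l * (x l - Real.tanh (β * mloc A x l + B))) := by
    rw [h1, key]
    ring
  rw [h2]
  ring

lemma prob_bound {n : ℕ} {A : Matrix (Fin n) (Fin n) ℝ} (hs : A.IsSymm)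
    (hd : ∀ i, A i i = 0) (hnn : ∀ i l, 0 ≤ A i l) (β B : ℝ) (hβ : 0 < β)
    {γ : ℝ} (hγ : ∀ i, ∑ l, A i l ≤ γ) {δ : ℝ} (hδ : 0 < δ) :
    isingProb A β B {x | δ < Real.sqrt (∑ i,
        (β * mloc A (bvec A β B x) i + B - arctanhR (bvec A β B x i)) ^ 2) / Real.sqrt n}
      ≤ (β^2 * (4 + 2*β*γ) / δ^2) * ((1/(n:ℝ)) * ∑ i, ∑ l, (A i l)^2) := by
  have hZ : 0 < ∑ σ : Fin n → Bool, isingWt A β B (spinVec n σ) :=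
    Finset.sum_pos (fun σ _ => Real.exp_pos _) Finset.univ_nonempty
  set T := ∑ i, ∑ l, (A i l)^2 with hT
  have hTnn : (0:ℝ) ≤ T := Finset.sum_nonneg fun i _ =>
    Finset.sum_nonneg fun l _ => sq_nonneg _
  rcases Nat.eq_zero_or_pos n with rfl | hn
  · have hE : ∀ x : Fin 0 → ℝ, x ∉ {x : Fin 0 → ℝ | δ < Real.sqrt (∑ i,
        (β * mloc A (bvec A β B x) i + B - arctanhR (bvec A β B x i)) ^ 2)
          / Real.sqrt ((0:ℕ):ℝ)} := by
      intro x hx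
      simp only [Set.mem_setOf_eq, Finset.univ_eq_empty, Finset.sum_empty, Real.sqrt_zero,
        Nat.cast_zero, zero_div] at hx
      linarith
    unfold isingProb
    rw [Finset.sum_congr rfl fun σ _ => Set.indicator_of_notMem (hE _) _]
    norm_num
  · have hnpos : (0:ℝ) < (n:ℝ) := by exact_mod_cast hn
    have hns : (0:ℝ) < Real.sqrt n := Real.sqrt_pos.2 hnpos
    have hnd : (0:ℝ) < (n:ℝ) * δ^2 := by positivity
    set E := {x : Fin n → ℝ | δ < Real.sqrt (∑ i,
        (β * mloc A (bvec A β B x) i + B - arctanhR (bvec A β B x i)) ^ 2) / Real.sqrt n} with hE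
    have hnum : ∑ σ : Fin n → Bool, E.indicator (isingWt A β B) (spinVec n σ)
        ≤ ∑ σ : Fin n → Bool, (β^2/((n:ℝ)*δ^2)) *
            ((∑ i, (∑ l, A i l * (spinVec n σ l - Real.tanh (β * mloc A (spinVec n σ) l + B)))^2)
              * isingWt A β B (spinVec n σ)) := by
      refine Finset.sum_le_sum fun σ _ => ?_
      set S := ∑ i, (∑ l, A i l *
          (spinVec n σ l - Real.tanh (β * mloc A (spinVec n σ) l + B)))^2 with hS
      have hS0 : (0:ℝ) ≤ S := Finset.sum_nonneg fun i _ => sq_nonneg _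
      have hw : (0:ℝ) < isingWt A β B (spinVec n σ) := Real.exp_pos _
      by_cases hmem : spinVec n σ ∈ E
      · rw [Set.indicator_of_mem hmem]
        have hSig : ∑ i, (β * mloc A (bvec A β B (spinVec n σ)) i + B
            - arctanhR (bvec A β B (spinVec n σ) i)) ^ 2 = β^2 * S := expr_eq A β B (spinVec n σ)
        have hlt : δ * Real.sqrt n < Real.sqrt (β^2 * S) := by
          have := hmem
          rw [hE, Set.mem_setOf_eq, hSig, lt_div_iff₀ hns] at this
          exact this
        have hkey : (n:ℝ) * δ^2 < β^2 * S := by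
          have hms := mul_self_lt_mul_self (by positivity) hlt
          rw [Real.mul_self_sqrt (by positivity)] at hms
          calc (n:ℝ) * δ^2 = (δ * Real.sqrt n) * (δ * Real.sqrt n) := by
                rw [show (δ * Real.sqrt n) * (δ * Real.sqrt n)
                    = δ^2 * (Real.sqrt n * Real.sqrt n) by ring,
                  Real.mul_self_sqrt hnpos.le]
                ring
            _ < β^2 * S := hms
        rw [div_mul_eq_mul_div, le_div_iff₀ hnd]
        calc isingWt A β B (spinVec n σ) * ((n:ℝ) * δ^2)
            ≤ isingWt A β B (spinVec n σ) * (β^2 * S) :=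
              mul_le_mul_of_nonneg_left hkey.le hw.le
          _ = β^2 * (S * isingWt A β B (spinVec n σ)) := by ring
      · rw [Set.indicator_of_notMem hmem]
        positivity
    have hN := Nbound hs hd hnn β B hβ hγ
    rw [← hT] at hN
    unfold isingProb
    rw [div_le_iff₀ hZ]
    calc ∑ σ : Fin n → Bool, E.indicator (isingWt A β B) (spinVec n σ)
        ≤ ∑ σ : Fin n → Bool, (β^2/((n:ℝ)*δ^2)) *
            ((∑ i, (∑ l, A i l * (spinVec n σ l - Real.tanh (β * mloc A (spinVec n σ) l + B)))^2)
              * isingWt A β B (spinVec n σ)) := hnum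
      _ = (β^2/((n:ℝ)*δ^2)) * ∑ σ : Fin n → Bool,
            (∑ i, (∑ l, A i l * (spinVec n σ l - Real.tanh (β * mloc A (spinVec n σ) l + B)))^2)
              * isingWt A β B (spinVec n σ) := by rw [Finset.mul_sum]
      _ ≤ (β^2/((n:ℝ)*δ^2)) * ((4 + 2*β*γ) * T *
            ∑ σ : Fin n → Bool, isingWt A β B (spinVec n σ)) := by
          refine mul_le_mul_of_nonneg_left hN (by positivity)
      _ = (β^2 * (4 + 2*β*γ) / δ^2) * ((1/(n:ℝ)) * T) *
            ∑ σ : Fin n → Bool, isingWt A β B (spinVec n σ) := by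
          field_simp

/-- `‖∇f_n(b(X)) - ∇I(b(X))‖/√n → 0` in probability. -/
theorem stmt16 (A : (n : ℕ) → Matrix (Fin n) (Fin n) ℝ)
    (hsymm : ∀ n, (A n).IsSymm)
    (hnonneg : ∀ n, ∀ i j : Fin n, 0 ≤ A n i j)
    (hdiag : ∀ n, ∀ i : Fin n, A n i i = 0)
    (hBD : ∃ γ : ℝ, ∀ n, ∀ i : Fin n, (∑ j, A n i j) ≤ γ)
    (hMF : Tendsto (fun n : ℕ => (1 / (n : ℝ)) * ∑ i, ∑ j, (A n i j) ^ 2) atTop (nhds 0))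
    (β B : ℝ) (hβ : 0 < β) (hB : B ≠ 0) :
    ∀ δ > (0 : ℝ),
      Tendsto (fun n : ℕ => isingProb (A n) β B
        {x | δ < Real.sqrt (∑ i,
            (β * mloc (A n) (bvec (A n) β B x) i + B -
              arctanhR (bvec (A n) β B x i)) ^ 2) / Real.sqrt n})
        atTop (nhds 0) := by
  obtain ⟨γ, hγ⟩ := hBD
  intro δ hδ
  have hb : ∀ n : ℕ, isingProb (A n) β B
      {x | δ < Real.sqrt (∑ i, (β * mloc (A n) (bvec (A n) β B x) i + B -
          arctanhR (bvec (A n) β B x i)) ^ 2) / Real.sqrt n}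
      ≤ (β^2 * (4 + 2*β*γ) / δ^2) * ((1/(n:ℝ)) * ∑ i, ∑ j, (A n i j)^2) :=
    fun n => prob_bound (hsymm n) (hdiag n) (hnonneg n) β B hβ (hγ n) hδ
  have h0 : ∀ n : ℕ, 0 ≤ isingProb (A n) β B
      {x | δ < Real.sqrt (∑ i, (β * mloc (A n) (bvec (A n) β B x) i + B -
          arctanhR (bvec (A n) β B x i)) ^ 2) / Real.sqrt n} :=
    fun n => isingProb_nonneg _ _ _ _
  have hlim := hMF.const_mul (β^2 * (4 + 2*β*γ) / δ^2)
  rw [mul_zero] at hlim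
  exact squeeze_zero h0 hb hlim
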